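/- Let n be a positive integer and let S be the set of real symmetric positive semidefinite n×n matrices whose largest eigenvalue (spectral norm) is at most 1. Then the trace is the convex hull (greatest convex minorant) of the rank on S; precisely: (i) the map Y ↦ trace(Y) is convex on S and trace(Y) ≤ rank(Y) for every Y ∈ S; (ii) for every function g : Matrix (Fin n) (Fin n) ℝ → ℝ that is convex on S and satisfies g(Y) ≤ rank(Y) for all Y ∈ S, one has g(Y) ≤ trace(Y) for all Y ∈ S. -/

import Mathlib

open Matrix Finset

-- test characterization lemma
lemma psd_char {n : ℕ} (Y : Matrix (Fin n) (Fin n) ℝ) :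
    (∃ h : Y.PosSemidef, ∀ i, h.1.eigenvalues i ≤ 1) ↔
      Y.PosSemidef ∧ (1 - Y).PosSemidef := by
  constructor
  · rintro ⟨hY, hle⟩
    refine ⟨hY, ?_⟩
    set V : Matrix (Fin n) (Fin n) ℝ := (hY.1.eigenvectorUnitary : Matrix (Fin n) (Fin n) ℝ) with hV
    have hVU : V * star V = 1 := (Matrix.mem_unitaryGroup_iff).mp hY.1.eigenvectorUnitary.2
    have hst : Y = V * diagonal hY.1.eigenvalues * star V := by
      have := hY.1.spectral_theorem
      simpa [RCLike.ofReal_real_eq_id] using this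
    have key : 1 - Y = V * diagonal (fun i => 1 - hY.1.eigenvalues i) * star V := by
      have : diagonal (fun i => 1 - hY.1.eigenvalues i) = 1 - diagonal hY.1.eigenvalues := by
        rw [← diagonal_one, ← diagonal_sub]
      rw [this, mul_sub, sub_mul, mul_one, hVU, ← hst]
    rw [key]
    exact (Matrix.PosSemidef.diagonal (fun i => by simpa using hle i)).mul_mul_conjTranspose_same V
  · rintro ⟨hY, h1⟩
    refine ⟨hY, fun i => ?_⟩
    have hv := hY.1.eigenvalues_eq i
    set v : Fin n → ℝ := ⇑(hY.1.eigenvectorBasis i) with hvdef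
    have hvv : star v ⬝ᵥ v = 1 := by
      have h1n : ‖hY.1.eigenvectorBasis i‖ = 1 := hY.1.eigenvectorBasis.orthonormal.1 i
      have h2 : (inner ℝ (hY.1.eigenvectorBasis i) (hY.1.eigenvectorBasis i) : ℝ) = star v ⬝ᵥ v := rfl
      rw [real_inner_self_eq_norm_sq, h1n] at h2
      simpa using h2.symm
    have h0 : 0 ≤ star v ⬝ᵥ ((1 - Y) *ᵥ v) := h1.dotProduct_mulVec_nonneg v
    rw [sub_mulVec, dotProduct_sub, one_mulVec, hvv] at h0
    have : hY.1.eigenvalues i = star v ⬝ᵥ (Y *ᵥ v) := by simpa using hv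
    linarith


lemma psd_smul {n : ℕ} {X : Matrix (Fin n) (Fin n) ℝ} (hX : X.PosSemidef)
    {a : ℝ} (ha : 0 ≤ a) : (a • X).PosSemidef := by
  refine .of_dotProduct_mulVec_nonneg ?_ fun z => ?_
  · unfold Matrix.IsHermitian
    rw [conjTranspose_smul, hX.1.eq]
    simp
  · rw [smul_mulVec, dotProduct_smul]
    exact smul_nonneg ha (hX.dotProduct_mulVec_nonneg z)

lemma S'_convex {n : ℕ} :
    Convex ℝ {Y : Matrix (Fin n) (Fin n) ℝ | Y.PosSemidef ∧ (1 - Y).PosSemidef} := by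
  rintro x ⟨hx, hx1⟩ y ⟨hy, hy1⟩ a b ha hb hab
  refine ⟨(psd_smul hx ha).add (psd_smul hy hb), ?_⟩
  have : (1 : Matrix (Fin n) (Fin n) ℝ) - (a • x + b • y)
      = a • (1 - x) + b • (1 - y) := by
    have h1 : a • (1 : Matrix (Fin n) (Fin n) ℝ) + b • 1 = 1 := by
      rw [← add_smul, hab, one_smul]
    calc (1 : Matrix (Fin n) (Fin n) ℝ) - (a • x + b • y)
        = (a • 1 + b • 1) - (a • x + b • y) := by rw [h1]
      _ = a • (1 - x) + b • (1 - y) := by rw [smul_sub, smul_sub]; abel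
  rw [this]
  exact (psd_smul hx1 ha).add (psd_smul hy1 hb)

lemma trace_eq_sum_eig {n : ℕ} {Y : Matrix (Fin n) (Fin n) ℝ} (h : Y.IsHermitian) :
    Y.trace = ∑ i, h.eigenvalues i := by
  have hst : Y = (h.eigenvectorUnitary : Matrix (Fin n) (Fin n) ℝ) * diagonal h.eigenvalues
      * star (h.eigenvectorUnitary : Matrix (Fin n) (Fin n) ℝ) := by
    simpa [RCLike.ofReal_real_eq_id] using h.spectral_theorem
  have hVU : star (h.eigenvectorUnitary : Matrix (Fin n) (Fin n) ℝ)
      * (h.eigenvectorUnitary : Matrix (Fin n) (Fin n) ℝ) = 1 :=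
    (Matrix.mem_unitaryGroup_iff').mp h.eigenvectorUnitary.2
  conv_lhs => rw [hst]
  rw [trace_mul_cycle, hVU, one_mul, trace_diagonal]

lemma trace_le_rank {n : ℕ} {Y : Matrix (Fin n) (Fin n) ℝ} (hY : Y.PosSemidef)
    (hle : ∀ i, hY.1.eigenvalues i ≤ 1) : Y.trace ≤ (Y.rank : ℝ) := by
  rw [trace_eq_sum_eig hY.1, hY.1.rank_eq_card_non_zero_eigs]
  rw [Fintype.card_subtype]
  calc ∑ i, hY.1.eigenvalues i = ∑ i ∈ univ.filter (fun i => hY.1.eigenvalues i ≠ 0),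
        hY.1.eigenvalues i := by
        rw [Finset.sum_filter_ne_zero]
    _ ≤ ∑ i ∈ univ.filter (fun i => hY.1.eigenvalues i ≠ 0), (1 : ℝ) :=
        Finset.sum_le_sum (fun i _ => hle i)
    _ = _ := by simp


lemma key_max {n : ℕ} (g : Matrix (Fin n) (Fin n) ℝ → ℝ)
    (S : Set (Matrix (Fin n) (Fin n) ℝ))
    (hmem : ∀ Z : Matrix (Fin n) (Fin n) ℝ, Z.PosSemidef → (1 - Z).PosSemidef → Z ∈ S)
    (hg : ConvexOn ℝ S g) (hgr : ∀ Z ∈ S, g Z ≤ (Z.rank : ℝ))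
    {Y : Matrix (Fin n) (Fin n) ℝ} (hY : Y.PosSemidef)
    (hle : ∀ i, hY.1.eigenvalues i ≤ 1) :
    g Y ≤ Y.trace := by
  classical
  set lam := hY.1.eigenvalues with hlam
  have hlam0 : ∀ i, 0 ≤ lam i := hY.eigenvalues_nonneg
  set V : Matrix (Fin n) (Fin n) ℝ := (hY.1.eigenvectorUnitary : Matrix (Fin n) (Fin n) ℝ) with hVdef
  have hVU : V * star V = 1 := (Matrix.mem_unitaryGroup_iff).mp hY.1.eigenvectorUnitary.2
  have hst : Y = V * diagonal lam * star V := by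
    simpa [RCLike.ofReal_real_eq_id] using hY.1.spectral_theorem
  set χ : Finset (Fin n) → Fin n → ℝ := fun T i => if i ∈ T then 1 else 0 with hχ
  set P : Finset (Fin n) → Matrix (Fin n) (Fin n) ℝ :=
    fun T => V * diagonal (χ T) * star V with hP
  set w : Finset (Fin n) → ℝ :=
    fun T => (∏ i ∈ T, lam i) * ∏ i ∈ univ \ T, (1 - lam i) with hw
  set t := (univ : Finset (Fin n)).powerset with ht
  -- weights nonneg
  have hw0 : ∀ T ∈ t, 0 ≤ w T := by
    intro T _
    exact mul_nonneg (Finset.prod_nonneg fun i _ => hlam0 i)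
      (Finset.prod_nonneg fun i _ => by linarith [hle i])
  -- weights sum to 1
  have hw1 : ∑ T ∈ t, w T = 1 := by
    rw [ht, hw, ← Finset.prod_add]
    simp
  -- marginals
  have hmarg : ∀ j, ∑ T ∈ t, w T * χ T j = lam j := by
    intro j
    have hpa := Finset.prod_add lam (fun i => if i = j then 0 else 1 - lam i) univ
    have hL : ∏ i, (lam i + if i = j then 0 else 1 - lam i) = lam j := by
      have he : ∀ i, lam i + (if i = j then 0 else 1 - lam i)
          = if i = j then lam i else 1 := by
        intro i; split <;> ring
      rw [Finset.prod_congr rfl (fun i _ => he i), Finset.prod_ite_eq' univ j lam]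
      simp
    have hR : ∑ T ∈ t, (∏ i ∈ T, lam i) * ∏ i ∈ univ \ T, (if i = j then 0 else 1 - lam i)
        = ∑ T ∈ t, w T * χ T j := by
      refine Finset.sum_congr rfl fun T hT => ?_
      by_cases hj : j ∈ T
      · have : ∏ i ∈ univ \ T, (if i = j then 0 else 1 - lam i)
            = ∏ i ∈ univ \ T, (1 - lam i) := by
          refine Finset.prod_congr rfl fun i hi => ?_
          rw [if_neg]
          rintro rfl
          exact (Finset.mem_sdiff.mp hi).2 hj
        rw [this, hχ]
        simp [hj, hw]
      · have hjm : j ∈ univ \ T := Finset.mem_sdiff.mpr ⟨Finset.mem_univ j, hj⟩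
        rw [Finset.prod_eq_zero hjm (by simp), hχ]
        simp [hj]
    rw [← hR, ← hpa, hL]
  -- representation
  have hrep : ∑ T ∈ t, w T • P T = Y := by
    have h1 : ∀ T, w T • P T = V * diagonal (fun j => w T * χ T j) * star V := by
      intro T
      rw [hP]
      rw [show (diagonal fun j => w T * χ T j) = w T • diagonal (χ T) by
        rw [← diagonal_smul]; rfl]
      rw [Matrix.mul_smul, Matrix.smul_mul]
    calc ∑ T ∈ t, w T • P T
        = ∑ T ∈ t, V * diagonal (fun j => w T * χ T j) * star V := by
          exact Finset.sum_congr rfl fun T _ => h1 T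
      _ = V * (∑ T ∈ t, diagonal (fun j => w T * χ T j)) * star V := by
          rw [Finset.mul_sum, Finset.sum_mul]
      _ = V * diagonal lam * star V := by
          congr 2
          ext i k
          rw [Matrix.sum_apply]
          by_cases h : i = k
          · subst h
            simp only [diagonal_apply_eq]
            exact hmarg i
          · simp [diagonal_apply_ne _ h]
      _ = Y := hst.symm
  -- membership of projections
  have hPmem : ∀ T, P T ∈ S := by
    intro T
    refine hmem _ ((Matrix.PosSemidef.diagonal ?_).mul_mul_conjTranspose_same V) ?_
    · intro i; rw [hχ]; dsimp only; split <;> norm_num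
    · have key : 1 - P T = V * diagonal (fun i => 1 - χ T i) * star V := by
        have hd : diagonal (fun i => 1 - χ T i) = 1 - diagonal (χ T) := by
          rw [← diagonal_one, ← diagonal_sub]
        rw [hd, mul_sub, sub_mul, mul_one, hVU, hP]
      rw [key]
      refine (Matrix.PosSemidef.diagonal ?_).mul_mul_conjTranspose_same V
      intro i; rw [hχ]; dsimp only; split <;> norm_num
  -- rank of projections
  have hrank : ∀ T, ((P T).rank : ℝ) = (T.card : ℝ) := by
    intro T
    have hdet : IsUnit V.det := Matrix.UnitaryGroup.det_isUnit hY.1.eigenvectorUnitary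
    have hdet' : IsUnit (star V).det := by
      have : star V = ((star hY.1.eigenvectorUnitary : unitaryGroup (Fin n) ℝ) :
          Matrix (Fin n) (Fin n) ℝ) := rfl
      rw [this]
      exact Matrix.UnitaryGroup.det_isUnit _
    rw [hP]
    rw [Matrix.rank_mul_eq_left_of_isUnit_det (star V) (V * diagonal (χ T)) hdet',
      Matrix.rank_mul_eq_right_of_isUnit_det V (diagonal (χ T)) hdet,
      Matrix.rank_diagonal]
    congr 1
    rw [Fintype.card_congr (Equiv.subtypeEquivRight (q := fun i => i ∈ T) ?_), Fintype.card_coe]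
    intro i
    rw [hχ]
    dsimp only
    by_cases h : i ∈ T <;> simp [h]
  -- Jensen
  have hj := hg.map_sum_le hw0 hw1 (fun T _ => hPmem T)
  rw [hrep] at hj
  refine hj.trans ?_
  have step2 : ∑ T ∈ t, w T • g (P T) ≤ ∑ T ∈ t, w T * (T.card : ℝ) := by
    refine Finset.sum_le_sum fun T hT => ?_
    rw [smul_eq_mul]
    refine mul_le_mul_of_nonneg_left ?_ (hw0 T hT)
    exact (hgr _ (hPmem T)).trans_eq (hrank T)
  refine step2.trans (le_of_eq ?_)
  have card_eq : ∀ T : Finset (Fin n), (T.card : ℝ) = ∑ j, χ T j := by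
    intro T
    rw [hχ]
    simp [Finset.sum_ite_mem]
  calc ∑ T ∈ t, w T * (T.card : ℝ)
      = ∑ T ∈ t, ∑ j, w T * χ T j := by
        refine Finset.sum_congr rfl fun T _ => ?_
        rw [card_eq, Finset.mul_sum]
    _ = ∑ j, ∑ T ∈ t, w T * χ T j := Finset.sum_comm
    _ = ∑ j, lam j := by exact Finset.sum_congr rfl fun j _ => hmarg j
    _ = Y.trace := by
        have hVU' : star V * V = 1 := (Matrix.mem_unitaryGroup_iff').mp hY.1.eigenvectorUnitary.2
        conv_rhs => rw [hst]
        rw [trace_mul_cycle, hVU', one_mul, trace_diagonal]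

open Matrix

/-- On the set `S` of real symmetric positive semidefinite `n × n`
matrices with all eigenvalues at most `1`, the trace is the convex hull (greatest
convex minorant) of the rank. -/
theorem trace_is_convex_hull_of_rank_on_psd_ball
    (n : ℕ) (hn : 0 < n)
    (S : Set (Matrix (Fin n) (Fin n) ℝ))
    (hS : S = {Y : Matrix (Fin n) (Fin n) ℝ |
      ∃ h : Y.PosSemidef, ∀ i, h.1.eigenvalues i ≤ 1}) :
    (ConvexOn ℝ S (fun Y => Y.trace) ∧ ∀ Y ∈ S, Y.trace ≤ (Y.rank : ℝ)) ∧
    (∀ g : Matrix (Fin n) (Fin n) ℝ → ℝ,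
      ConvexOn ℝ S g → (∀ Y ∈ S, g Y ≤ (Y.rank : ℝ)) →
      ∀ Y ∈ S, g Y ≤ Y.trace) := by
  have hSeq : S = {Y : Matrix (Fin n) (Fin n) ℝ | Y.PosSemidef ∧ (1 - Y).PosSemidef} := by
    rw [hS]
    ext Y
    exact psd_char Y
  have hconv : Convex ℝ S := by rw [hSeq]; exact S'_convex
  refine ⟨⟨⟨hconv, ?_⟩, ?_⟩, ?_⟩
  · intro x _ y _ a b ha hb hab
    simp only [trace_add, trace_smul, smul_eq_mul]
    exact le_of_eq rfl
  · intro Y hY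
    rw [hS] at hY
    obtain ⟨h1, hle⟩ := hY
    exact trace_le_rank h1 hle
  · intro g hg hgr Y hY
    rw [hS] at hY
    obtain ⟨h1, hle⟩ := hY
    exact key_max g S (fun Z hz1 hz2 => by rw [hSeq]; exact ⟨hz1, hz2⟩) hg hgr h1 hle
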